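/- Let M be a cancellative atomic monoid carrying a fundamental element, and let δ ∈ M be an element for which there is a map σ from the atoms of M to M with s·δ = δ·σ(s) for every atom s. Then δ is quasi-central, i.e., σ maps atoms to atoms and is a permutation of the atoms. -/

import Mathlib

/-- An atom of a monoid: a non-identity element that is indecomposable. -/
def IsMonAtom {M : Type*} [Monoid M] (a : M) : Prop :=
  a ≠ 1 ∧ ∀ b c : M, a = b * c → b = 1 ∨ c = 1

/-- A monoid is atomic if it carries a norm `ν` with `ν α = 0 ↔ α = 1` and
`ν (αβ) ≥ ν α + ν β`. -/
def IsAtomicMonoid (M : Type*) [Monoid M] : Prop :=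
  ∃ ν : M → ℕ, (∀ a : M, ν a = 0 ↔ a = 1) ∧ ∀ a b : M, ν a + ν b ≤ ν (a * b)

/-- Cancellation condition: `a * x * b = a * y * b` implies `x = y`. -/
def IsCancellative (M : Type*) [Monoid M] : Prop :=
  ∀ a b x y : M, a * x * b = a * y * b → x = y

/-- The monoid is generated by its atoms. -/
def GeneratedByAtoms (M : Type*) [Monoid M] : Prop :=
  Submonoid.closure {a : M | IsMonAtom a} = ⊤

/-- Quasi-central element: `s·Δ = Δ·σ(s)` for a permutation `σ` of the atoms. -/
def IsQuasiCentral {M : Type*} [Monoid M] (Δ : M) : Prop :=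
  ∃ σ : {a : M // IsMonAtom a} ≃ {a : M // IsMonAtom a},
    ∀ s : {a : M // IsMonAtom a}, (s : M) * Δ = Δ * (σ s : M)

/-- Fundamental element: there is a permutation `σ` of the atoms such that for every
atom `s` one has `Δ = s·Δ_s = Δ_s·σ(s)` for some `Δ_s`. -/
def IsFundamental {M : Type*} [Monoid M] (Δ : M) : Prop :=
  ∃ σ : {a : M // IsMonAtom a} ≃ {a : M // IsMonAtom a},
    ∀ s : {a : M // IsMonAtom a}, ∃ d : M, Δ = (s : M) * d ∧ Δ = d * (σ s : M)


/-- If δ admits a map σ from atoms to the monoid with s·δ = δ·σ(s) for every atom s,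
then σ maps atoms to atoms, restricts to a permutation of the atoms, and δ is
quasi-central. -/
theorem stmt_9 {M : Type*} [Monoid M] (hcan : IsCancellative M) (hat : IsAtomicMonoid M)
    (hgen : GeneratedByAtoms M) (hfin : {a : M | IsMonAtom a}.Finite)
    (hF : ∃ Δ : M, IsFundamental Δ)
    (δ : M) (σ : {a : M // IsMonAtom a} → M)
    (hσ : ∀ s : {a : M // IsMonAtom a}, (s : M) * δ = δ * σ s) :
    (∃ σ' : {a : M // IsMonAtom a} ≃ {a : M // IsMonAtom a},
      ∀ s : {a : M // IsMonAtom a}, ((σ' s : M) = σ s)) ∧ IsQuasiCentral δ := by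
  classical
  obtain ⟨ν, hν0, hνadd⟩ := hat
  obtain ⟨Δ, σ₀, hΔ⟩ := hF
  haveI hfinsub : Finite {a : M // IsMonAtom a} := hfin.to_subtype
  have lcan : ∀ a x y : M, a * x = a * y → x = y := fun a x y h =>
    hcan a 1 x y (by simpa using h)
  have rcan : ∀ b x y : M, x * b = y * b → x = y := fun b x y h =>
    hcan 1 b x y (by simpa using h)
  have hmemtop : ∀ x : M, x ∈ Submonoid.closure {a : M | IsMonAtom a} := by
    intro x; rw [hgen]; trivial
  -- existence of the conjugation map φ
  have hφex : ∀ x : M, ∃ y, x * δ = δ * y := by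
    intro x
    refine Submonoid.closure_induction ?_ ?_ ?_ (hmemtop x)
    · intro a ha
      exact ⟨σ ⟨a, ha⟩, hσ ⟨a, ha⟩⟩
    · exact ⟨1, by simp⟩
    · rintro x y hx hy ⟨x', hx'⟩ ⟨y', hy'⟩
      exact ⟨x' * y', by rw [mul_assoc, hy', ← mul_assoc, hx', mul_assoc]⟩
  set φ : M → M := fun x => Classical.choose (hφex x) with hφdef
  have hφ : ∀ x : M, x * δ = δ * φ x := fun x => Classical.choose_spec (hφex x)
  have hφuniq : ∀ x y : M, x * δ = δ * y → φ x = y := by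
    intro x y h
    exact lcan δ _ _ (by rw [← hφ, h])
  have φ1 : φ 1 = 1 := hφuniq 1 1 (by simp)
  have φmul : ∀ x y : M, φ (x * y) = φ x * φ y := by
    intro x y
    refine hφuniq _ _ ?_
    rw [mul_assoc, hφ y, ← mul_assoc, hφ x, mul_assoc]
  have φinj : Function.Injective φ := by
    intro x y h
    exact rcan δ _ _ (by rw [hφ x, hφ y, h])
  have itmul : ∀ (n : ℕ) (x y : M), φ^[n] (x * y) = φ^[n] x * φ^[n] y := by
    intro n
    induction n with
    | zero => simp
    | succ n ih =>
      intro x y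
      simp only [Function.iterate_succ_apply', ih, φmul]
  have itinj : ∀ n : ℕ, Function.Injective φ^[n] := fun n => φinj.iterate n
  have it1 : ∀ n : ℕ, φ^[n] (1 : M) = 1 := by
    intro n
    induction n with
    | zero => rfl
    | succ n ih => simp [Function.iterate_succ_apply', ih, φ1]
  -- Δ is quasi-central
  have hΔqc : ∀ s : {a : M // IsMonAtom a}, (s : M) * Δ = Δ * (σ₀ s : M) := by
    intro s
    obtain ⟨d, h1, h2⟩ := hΔ s
    calc (s : M) * Δ = (s : M) * (d * (σ₀ s : M)) := by rw [← h2]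
    _ = ((s : M) * d) * (σ₀ s : M) := by rw [mul_assoc]
    _ = Δ * (σ₀ s : M) := by rw [← h1]
  obtain ⟨m, mpos, hm⟩ := (isOfFinOrder_of_finite σ₀).exists_pow_eq_one
  have hΔpow : ∀ (n : ℕ) (s : {a : M // IsMonAtom a}),
      (s : M) * Δ ^ n = Δ ^ n * ((σ₀ ^ n) s : M) := by
    intro n
    induction n with
    | zero => simp
    | succ n ih =>
      intro s
      have : (σ₀ ^ (n + 1)) s = (σ₀ ^ n) (σ₀ s) := by
        rw [pow_succ]; rfl
      rw [this, pow_succ']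
      calc (s : M) * (Δ * Δ ^ n) = ((s : M) * Δ) * Δ ^ n := by rw [mul_assoc]
      _ = Δ * ((σ₀ s : M) * Δ ^ n) := by rw [hΔqc s, mul_assoc]
      _ = Δ * (Δ ^ n * ((σ₀ ^ n) (σ₀ s) : M)) := by rw [ih (σ₀ s)]
      _ = Δ * Δ ^ n * ((σ₀ ^ n) (σ₀ s) : M) := by rw [mul_assoc]
  set Θ : M := Δ ^ m with hΘdef
  have hΘatom : ∀ s : {a : M // IsMonAtom a}, (s : M) * Θ = Θ * (s : M) := by
    intro s
    have := hΔpow m s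
    rwa [hm] at this
  have hΘcen : ∀ x : M, x * Θ = Θ * x := by
    intro x
    refine Submonoid.closure_induction ?_ ?_ ?_ (hmemtop x)
    · intro a ha; exact hΘatom ⟨a, ha⟩
    · simp
    · intro x y _ _ hx hy
      rw [mul_assoc, hy, ← mul_assoc, hx, mul_assoc]
  have φΘ : φ Θ = Θ := hφuniq Θ Θ (hΘcen δ).symm
  -- every atom left-divides Θ
  obtain ⟨m', rfl⟩ : ∃ m', m = m' + 1 := ⟨m - 1, (Nat.succ_pred_eq_of_pos mpos).symm⟩
  have hdivΘ : ∀ s : M, IsMonAtom s → ∃ y, s * y = Θ := by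
    intro s hs
    obtain ⟨d, h1, _⟩ := hΔ ⟨s, hs⟩
    exact ⟨d * Δ ^ m', by rw [hΘdef, pow_succ', h1, mul_assoc]⟩
  -- decomposition into atoms and norm bounds
  have hprodatoms : ∀ x : M, ∃ l : List M, (∀ a ∈ l, IsMonAtom a) ∧ x = l.prod := by
    intro x
    refine Submonoid.closure_induction ?_ ?_ ?_ (hmemtop x)
    · intro a ha; exact ⟨[a], by simpa using ha, by simp⟩
    · exact ⟨[], by simp, by simp⟩
    · rintro x y _ _ ⟨lx, hlx, rfl⟩ ⟨ly, hly, rfl⟩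
      refine ⟨lx ++ ly, ?_, by simp⟩
      intro a ha
      rcases List.mem_append.mp ha with h | h
      · exact hlx a h
      · exact hly a h
  have hνatom : ∀ a : M, IsMonAtom a → 1 ≤ ν a := by
    intro a ha
    have : ν a ≠ 0 := fun h => ha.1 ((hν0 a).mp h)
    omega
  have hνlist : ∀ l : List M, (∀ a ∈ l, IsMonAtom a) → l.length ≤ ν l.prod := by
    intro l
    induction l with
    | nil => simp
    | cons a t ih =>
      intro h
      have h1 : 1 ≤ ν a := hνatom a (h a List.mem_cons_self)
      have h2 : t.length ≤ ν t.prod := ih fun b hb => h b (List.mem_cons_of_mem a hb)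
      have h3 : ν a + ν t.prod ≤ ν (a * t.prod) := hνadd a t.prod
      simp only [List.prod_cons, List.length_cons]
      omega
  set D : Set M := {x : M | ∃ y, x * y = Θ} with hDdef
  have hνD : ∀ x ∈ D, ν x ≤ ν Θ := by
    rintro x ⟨y, hxy⟩
    have := hνadd x y
    rw [hxy] at this
    omega
  -- D is finite
  have hDfin : D.Finite := by
    have fin1 : {l : List {a : M // IsMonAtom a} | l.length ≤ ν Θ}.Finite :=
      List.finite_length_le _ (ν Θ)
    have fin2 : ((fun l : List {a : M // IsMonAtom a} =>
        (l.map Subtype.val).prod) '' {l | l.length ≤ ν Θ}).Finite := fin1.image _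
    refine fin2.subset ?_
    intro x hx
    obtain ⟨l, hl, rfl⟩ := hprodatoms x
    have lift : ∀ l : List M, (∀ a ∈ l, IsMonAtom a) →
        ∃ l' : List {a : M // IsMonAtom a}, l'.map Subtype.val = l := by
      intro l
      induction l with
      | nil => exact fun _ => ⟨[], rfl⟩
      | cons a t ih =>
        intro h
        obtain ⟨t', ht⟩ := ih fun b hb => h b (List.mem_cons_of_mem a hb)
        exact ⟨⟨a, h a List.mem_cons_self⟩ :: t', by simp [ht]⟩
    obtain ⟨l', rfl⟩ := lift l hl
    refine ⟨l', ?_, rfl⟩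
    have : (l'.map Subtype.val).length ≤ ν (l'.map Subtype.val).prod := hνlist _ hl
    have h2 := hνD _ hx
    simpa using le_trans (by simpa using this) h2
  -- φ maps D into D, and its iterates likewise
  have hφD : ∀ x ∈ D, φ x ∈ D := by
    rintro x ⟨y, hy⟩
    exact ⟨φ y, by rw [← φmul, hy, φΘ]⟩
  have hitD : ∀ (n : ℕ), ∀ x ∈ D, φ^[n] x ∈ D := by
    intro n
    induction n with
    | zero => exact fun x hx => hx
    | succ n ih =>
      intro x hx
      rw [Function.iterate_succ_apply']
      exact hφD _ (ih x hx)
  -- pigeonhole: some iterate of φ fixes D pointwise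
  haveI := hDfin.to_subtype
  obtain ⟨i, j, hij, hF⟩ := Finite.exists_ne_map_eq_of_infinite
    (fun n : ℕ => fun x : D => (⟨φ^[n] x.1, hitD n x.1 x.2⟩ : D))
  have key : ∀ i j : ℕ, i < j →
      ((fun x : D => (⟨φ^[i] x.1, hitD i x.1 x.2⟩ : D)) =
        fun x : D => (⟨φ^[j] x.1, hitD j x.1 x.2⟩ : D)) →
      ∃ k, 0 < k ∧ ∀ x ∈ D, φ^[k] x = x := by
    intro i j hlt heq
    refine ⟨j - i, by omega, ?_⟩
    intro x hx
    have h1 : φ^[i] x = φ^[j] x := congrArg Subtype.val (congrFun heq ⟨x, hx⟩)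
    have h2 : φ^[j] x = φ^[i] (φ^[j - i] x) := by
      rw [← Function.iterate_add_apply]
      congr 1
      omega
    exact (itinj i (h1.trans h2)).symm
  have hkex : ∃ k, 0 < k ∧ ∀ x ∈ D, φ^[k] x = x := by
    rcases lt_or_gt_of_ne hij with h | h
    · exact key i j h hF
    · exact key j i h hF.symm
  obtain ⟨k, kpos, hk⟩ := hkex
  obtain ⟨k', rfl⟩ : ∃ k'', k = k'' + 1 := ⟨k - 1, (Nat.succ_pred_eq_of_pos kpos).symm⟩
  -- φ maps atoms to atoms
  have hatomφ : ∀ s : M, IsMonAtom s → IsMonAtom (φ s) := by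
    intro s hs
    constructor
    · intro h1
      exact hs.1 (φinj (h1.trans φ1.symm))
    · intro b c hbc
      have hsD : s ∈ D := hdivΘ s hs
      have hfix : φ^[k' + 1] s = s := hk s hsD
      have hdec : s = φ^[k'] b * φ^[k'] c := by
        rw [← hfix, Function.iterate_succ_apply, hbc, itmul]
      rcases hs.2 _ _ hdec with h | h
      · exact Or.inl (itinj k' (h.trans (it1 k').symm))
      · exact Or.inr (itinj k' (h.trans (it1 k').symm))
  have hφσ : ∀ s : {a : M // IsMonAtom a}, φ (s : M) = σ s := fun s =>
    hφuniq _ _ (hσ s)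
  -- the permutation of atoms
  set τ : {a : M // IsMonAtom a} → {a : M // IsMonAtom a} :=
    fun s => ⟨φ (s : M), hatomφ _ s.2⟩ with hτdef
  have τinj : Function.Injective τ := by
    intro s t h
    have : φ (s : M) = φ (t : M) := congrArg Subtype.val h
    exact Subtype.ext (φinj this)
  have τbij : Function.Bijective τ := Finite.injective_iff_bijective.mp τinj
  refine ⟨⟨Equiv.ofBijective τ τbij, fun s => ?_⟩,
    ⟨Equiv.ofBijective τ τbij, fun s => ?_⟩⟩
  · exact hφσ s
  · show (s : M) * δ = δ * (τ s : M)
    rw [hσ s]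
    congr 1
    exact (hφσ s).symm
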